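/- For every integer i ≥ 0, the functor Ext^i_O(m, −) on O-modules sends α-isomorphisms to isomorphisms. In particular, if P is an α-null O-module then Ext^i_O(m, P) = 0 for all i ≥ 0. -/

import Mathlib

/-!
`O` is the valuation ring of the `p`-adic completion of an algebraic closure of `ℚ_p`,
encoded abstractly as a valuation ring (local domain) with idempotent maximal ideal `m`.
The statement: for every `i ≥ 0` the functor `Ext^i_O(m, −)` sends α-isomorphisms to
isomorphisms; in particular if `P` is α-null then `Ext^i_O(m, P) = 0`.
-/

universe u

open IsLocalRing CategoryTheory Opposite

/-- An `O`-module is α-null (w.r.t. the ideal `m`) if it is annihilated by every element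
of `m`. -/
def IsAlphaNull {O : Type u} [CommRing O] (m : Ideal O)
    (P : Type u) [AddCommGroup P] [Module O P] : Prop :=
  ∀ γ ∈ m, ∀ x : P, γ • x = 0

/-- A morphism of `O`-modules is an α-isomorphism (w.r.t. the ideal `m`) if its kernel and
cokernel are annihilated by every element of `m`. -/
def IsAlphaIso {O : Type u} [CommRing O] (m : Ideal O)
    {M N : Type u} [AddCommGroup M] [Module O M] [AddCommGroup N] [Module O N]
    (f : M →ₗ[O] N) : Prop :=
  (∀ γ ∈ m, ∀ x ∈ LinearMap.ker f, γ • x = 0) ∧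
    (∀ γ ∈ m, ∀ y : N, γ • y ∈ LinearMap.range f)

/-- The functor `Ext^i_O(m, -)` on `O`-modules. -/
noncomputable def extMaximalIdeal (O : Type u) [CommRing O] [IsDomain O] [ValuationRing O]
    (i : ℕ) : ModuleCat.{u} O ⥤ ModuleCat.{u} O :=
  (Ext O (ModuleCat.{u} O) i).obj (op (ModuleCat.of O (maximalIdeal O)))

set_option linter.unusedSectionVars false

section Alg

variable {O : Type u} [CommRing O] [IsDomain O] [ValuationRing O]

/-- torsion-free -/
def NoTors (M : Type u) [AddCommGroup M] [Module O M] : Prop :=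
  ∀ (c : O) (x : M), c • x = 0 → c = 0 ∨ x = 0

theorem finset_exists_dvd (s : Finset O) (hs : s.Nonempty) : ∃ c ∈ s, ∀ b ∈ s, c ∣ b := by
  classical
  induction s using Finset.induction_on with
  | empty => exact absurd hs (by simp)
  | @insert a t ha ih =>
    rcases t.eq_empty_or_nonempty with rfl | ht
    · exact ⟨a, by simp⟩
    · obtain ⟨c, hc, hcd⟩ := ih ht
      rcases ValuationRing.dvd_total c a with h | h
      · exact ⟨c, Finset.mem_insert_of_mem hc, by
          intro b hb
          rcases Finset.mem_insert.1 hb with rfl | hb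
          · exact h
          · exact hcd b hb⟩
      · exact ⟨a, Finset.mem_insert_self a t, by
          intro b hb
          rcases Finset.mem_insert.1 hb with rfl | hb
          · exact dvd_rfl
          · exact h.trans (hcd b hb)⟩

theorem smul_top_map {M N : Type u} [AddCommGroup M] [Module O M] [AddCommGroup N] [Module O N]
    (mI : Ideal O) (f : M →ₗ[O] N) {x : M} (hx : x ∈ mI • (⊤ : Submodule O M)) :
    f x ∈ mI • (⊤ : Submodule O N) := by
  refine Submodule.smul_induction_on hx (fun γ hγ n _ => ?_) (fun y z hy hz => ?_)
  · rw [map_smul]; exact Submodule.smul_mem_smul hγ Submodule.mem_top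
  · rw [map_add]; exact Submodule.add_mem _ hy hz

theorem coords_mem (mI : Ideal O) {ι : Type u} {x : ι →₀ O}
    (hx : x ∈ mI • (⊤ : Submodule O (ι →₀ O))) (b : ι) : x b ∈ mI := by
  refine Submodule.smul_induction_on hx (fun γ hγ n _ => ?_) (fun y z hy hz => ?_)
  · simp only [Finsupp.smul_apply, smul_eq_mul]
    exact Ideal.mul_mem_right _ _ hγ
  · simpa using Ideal.add_mem _ hy hz

theorem noTors_finsupp (ι : Type u) : NoTors (O := O) (ι →₀ O) := by
  intro c x hc
  rcases eq_or_ne c 0 with rfl | hne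
  · exact Or.inl rfl
  · refine Or.inr (Finsupp.ext fun b => ?_)
    have := congrArg (fun g : ι →₀ O => g b) hc
    simp only [Finsupp.smul_apply, smul_eq_mul, Finsupp.coe_zero, Pi.zero_apply] at this
    rcases mul_eq_zero.1 this with h | h
    · exact absurd h hne
    · simpa using h

theorem noTors_of_injective {M N : Type u} [AddCommGroup M] [Module O M] [AddCommGroup N]
    [Module O N] (f : M →ₗ[O] N) (hf : Function.Injective f) (hN : NoTors (O := O) N) :
    NoTors (O := O) M := by
  intro c x hc
  rcases hN c (f x) (by rw [← map_smul, hc, map_zero]) with h | h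
  · exact Or.inl h
  · exact Or.inr (hf (by rw [h, map_zero]))

theorem noTors_projective (M : Type u) [AddCommGroup M] [Module O M] [Module.Projective O M] :
    NoTors (O := O) M := by
  obtain ⟨s, hs⟩ := Module.Projective.out (R := O) (P := M)
  refine noTors_of_injective s (fun x y hxy => ?_) (noTors_finsupp M)
  rw [← hs x, ← hs y, hxy]

theorem noTors_submodule (p : Submodule O O) : NoTors (O := O) p := by
  intro c x hc
  have : c * (x : O) = 0 := congrArg Subtype.val hc
  rcases mul_eq_zero.1 this with h | h
  · exact Or.inl h
  · exact Or.inr (Subtype.ext h)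

/-- Key saturation lemma: if `M` is projective and `M ⧸ K` is torsion-free, then
`(I•M) ∩ K ≤ I•K`. -/
theorem alphaSmul_inf_le {M : Type u} [AddCommGroup M] [Module O M] [Module.Projective O M]
    (mI : Ideal O) (K : Submodule O M) (hq : NoTors (O := O) (M ⧸ K)) :
    (mI • (⊤ : Submodule O M)) ⊓ K ≤ mI • K := by
  classical
  rintro x ⟨hx1, hx2⟩
  obtain ⟨s, hs⟩ := Module.Projective.out (R := O) (P := M)
  by_cases h0 : s x = 0
  · have : x = 0 := by rw [← hs x, h0, map_zero]
    simp [this]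
  · have hcoords : ∀ b, (s x) b ∈ mI := fun b => coords_mem mI (smul_top_map mI s hx1) b
    have hsupp : ((s x).support.image (s x)).Nonempty :=
      (Finsupp.support_nonempty_iff.2 h0).image _
    obtain ⟨c, hc_mem, hc_dvd⟩ := finset_exists_dvd _ hsupp
    obtain ⟨b₀, hb₀, rfl⟩ := Finset.mem_image.1 hc_mem
    set c := (s x) b₀ with hc_def
    have hc0 : c ≠ 0 := Finsupp.mem_support_iff.1 hb₀
    have hcI : c ∈ mI := hcoords b₀
    have hdvd : ∀ b, c ∣ (s x) b := by
      intro b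
      by_cases hb : b ∈ (s x).support
      · exact hc_dvd _ (Finset.mem_image_of_mem _ hb)
      · rw [Finsupp.notMem_support_iff.1 hb]; exact dvd_zero c
    have hchoose : ∀ b, (s x) b = c * (hdvd b).choose := fun b => (hdvd b).choose_spec
    set w : M →₀ O := Finsupp.onFinset (s x).support (fun b => (hdvd b).choose)
      (by
        intro b hb
        rw [Finsupp.mem_support_iff]
        intro hzero
        apply hb
        have hcb := (hchoose b).symm.trans hzero
        exact (mul_eq_zero.1 hcb).resolve_left hc0) with hw_def
    have hw : c • w = s x := by
      ext b
      simp only [Finsupp.smul_apply, smul_eq_mul, hw_def, Finsupp.onFinset_apply]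
      exact (hchoose b).symm
    set y := Finsupp.linearCombination O (id : M → M) w with hy_def
    have hcy : c • y = x := by
      rw [hy_def, ← map_smul, hw, hs x]
    have hqy : (c : O) • (Submodule.Quotient.mk y : M ⧸ K) = 0 := by
      rw [← Submodule.Quotient.mk_smul, hcy, Submodule.Quotient.mk_eq_zero]
      exact hx2
    rcases hq c _ hqy with h | h
    · exact absurd h hc0
    · have hyK : y ∈ K := (Submodule.Quotient.mk_eq_zero K).1 h
      rw [← hcy]
      exact Submodule.smul_mem_smul hcI hyK

theorem hom_eq_zero {Q Y : Type u} [AddCommGroup Q] [Module O Q] [AddCommGroup Y] [Module O Y]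
    (mI : Ideal O) (hQ : ∀ x : Q, x ∈ mI • (⊤ : Submodule O Q))
    (hY : IsAlphaNull mI Y) (f : Q →ₗ[O] Y) (x : Q) : f x = 0 := by
  refine Submodule.smul_induction_on (hQ x) (fun γ hγ n _ => ?_) (fun y z hy hz => ?_)
  · rw [map_smul]; exact hY γ hγ _
  · rw [map_add, hy, hz, add_zero]

end Alg

section Extension

variable {O : Type u} [CommRing O] [IsDomain O] [ValuationRing O]

/-- Extension lemma: a map into an α-null module defined on (essentially) a saturated
submodule of a projective module extends. -/
theorem extend_lemma {A B T Y : Type u}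
    [AddCommGroup A] [Module O A] [AddCommGroup B] [Module O B] [Module.Projective O B]
    [AddCommGroup T] [Module O T] [AddCommGroup Y] [Module O Y]
    (hT : NoTors (O := O) T) (hY : IsAlphaNull (maximalIdeal O) Y)
    (g : A →ₗ[O] B) (h : B →ₗ[O] T) (hker : LinearMap.ker h = LinearMap.range g)
    (φ : A →ₗ[O] Y) (hφ : LinearMap.ker g ≤ LinearMap.ker φ) :
    ∃ ψ : B →ₗ[O] Y, ψ ∘ₗ g = φ := by
  classical
  set m := maximalIdeal O with hm
  -- the quotient B ⧸ range g is torsion-free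
  have hq : NoTors (O := O) (B ⧸ LinearMap.range g) := by
    intro c x hcx
    obtain ⟨x, rfl⟩ := Submodule.Quotient.mk_surjective _ x
    rw [← Submodule.Quotient.mk_smul, Submodule.Quotient.mk_eq_zero] at hcx
    rw [← hker] at hcx
    rcases hT c (h x) (by rw [← map_smul]; exact hcx) with hc | hc
    · exact Or.inl hc
    · exact Or.inr (by rw [Submodule.Quotient.mk_eq_zero, ← hker]; exact hc)
  set mB := m • (⊤ : Submodule O B) with hmB
  set π := mB.mkQ with hπ
  set ρ := π ∘ₗ g with hρ
  have hkerρ : LinearMap.ker ρ ≤ LinearMap.ker φ := by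
    intro x hx
    have hgx : g x ∈ (m • (⊤ : Submodule O B)) ⊓ LinearMap.range g := by
      constructor
      · have : π (g x) = 0 := hx
        simpa [hπ, Submodule.mkQ_apply, Submodule.Quotient.mk_eq_zero] using this
      · exact LinearMap.mem_range_self g x
    have hgx' : g x ∈ m • LinearMap.range g :=
      alphaSmul_inf_le m (LinearMap.range g) hq hgx
    -- show φ x = 0 by induction over the membership of g x
    have main : ∀ b ∈ m • LinearMap.range g,
        b ∈ LinearMap.range g ∧ ∀ z : A, g z = b → φ z = 0 := by
      intro b hb
      refine Submodule.smul_induction_on hb ?_ ?_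
      · rintro γ hγ _ ⟨a, rfl⟩
        refine ⟨⟨γ • a, by rw [map_smul]⟩, fun z hz => ?_⟩
        have : z - γ • a ∈ LinearMap.ker g := by
          rw [LinearMap.mem_ker, map_sub, hz, map_smul, sub_self]
        have h1 : φ (z - γ • a) = 0 := hφ this
        have h2 : φ (γ • a) = 0 := by rw [map_smul]; exact hY γ hγ _
        calc φ z = φ (z - γ • a) + φ (γ • a) := by rw [← map_add, sub_add_cancel]
        _ = 0 := by rw [h1, h2, add_zero]
      · rintro b₁ b₂ ⟨⟨a₁, ha₁⟩, hb₁⟩ ⟨hb₂mem, hb₂⟩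
        refine ⟨Submodule.add_mem _ ⟨a₁, ha₁⟩ hb₂mem, fun z hz => ?_⟩
        have hza : g (z - a₁) = b₂ := by rw [map_sub, hz, ha₁]; abel
        have h1 : φ (z - a₁) = 0 := hb₂ _ hza
        have h2 : φ a₁ = 0 := hb₁ _ ha₁
        calc φ z = φ (z - a₁) + φ a₁ := by rw [← map_add, sub_add_cancel]
        _ = 0 := by rw [h1, h2, add_zero]
    exact (main _ hgx').2 x rfl
  -- factor φ through V := range ρ
  set V := LinearMap.range ρ with hV
  set σ : V →ₗ[O] Y :=
    ((LinearMap.ker ρ).liftQ φ hkerρ) ∘ₗ (ρ.quotKerEquivRange).symm.toLinearMap with hσdef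
  have hσ : ∀ (x : A) (hx : ρ x ∈ V), σ ⟨ρ x, hx⟩ = φ x := by
    intro x hx
    have h1 : ρ.quotKerEquivRange (Submodule.Quotient.mk x) = ⟨ρ x, hx⟩ := by
      apply Subtype.ext
      simp [LinearMap.quotKerEquivRange]
    have h2 : (ρ.quotKerEquivRange).symm ⟨ρ x, hx⟩ = Submodule.Quotient.mk x := by
      rw [← h1, LinearEquiv.symm_apply_apply]
    simp [hσdef, h2]
  -- pass to the residue field
  haveI : (maximalIdeal O).IsMaximal := IsLocalRing.maximalIdeal.isMaximal O
  letI kk : Type u := O ⧸ m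
  letI : Field kk := Ideal.Quotient.field m
  set W := B ⧸ mB with hW
  have hWt : Module.IsTorsionBySet O W (m : Set O) := by
    intro x γ
    obtain ⟨b, rfl⟩ := Submodule.Quotient.mk_surjective _ x
    rw [← Submodule.Quotient.mk_smul, Submodule.Quotient.mk_eq_zero]
    exact Submodule.smul_mem_smul γ.2 Submodule.mem_top
  have hYt : Module.IsTorsionBySet O Y (m : Set O) := fun x γ => hY γ.1 γ.2 x
  letI : Module kk W := hWt.module
  letI : Module kk Y := hYt.module
  haveI : IsScalarTower O kk W := hWt.isScalarTower
  haveI : IsScalarTower O kk Y := hYt.isScalarTower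
  -- V as a kk-submodule
  set V' : Submodule kk W :=
    { carrier := (V : Set W)
      add_mem' := fun ha hb => V.add_mem ha hb
      zero_mem' := V.zero_mem
      smul_mem' := by
        rintro c x hx
        obtain ⟨c, rfl⟩ := Ideal.Quotient.mk_surjective c
        rw [hWt.mk_smul]
        exact V.smul_mem c hx } with hV'def
  obtain ⟨q, hcompl⟩ := Submodule.exists_isCompl V'
  set pr := V'.linearProjOfIsCompl q hcompl with hpr
  set τ : W →ₗ[kk] W := V'.subtype ∘ₗ pr with hτdef
  have hτ : ∀ w (hw : w ∈ V), τ w = w := by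
    intro w hw
    have : pr w = ⟨w, hw⟩ := Submodule.linearProjOfIsCompl_apply_left hcompl ⟨w, hw⟩
    simp [hτdef, this]
  have hτmem : ∀ w, τ w ∈ V := fun w => (pr w).2
  set τO : W →ₗ[O] W := τ.restrictScalars O with hτO
  set θ : B →ₗ[O] V := LinearMap.codRestrict V (τO ∘ₗ π) (fun b => hτmem _) with hθ
  refine ⟨σ ∘ₗ θ, ?_⟩
  ext x
  have h1 : θ (g x) = ⟨ρ x, LinearMap.mem_range_self ρ x⟩ := by
    apply Subtype.ext
    show τO (π (g x)) = ρ x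
    exact hτ (ρ x) (LinearMap.mem_range_self ρ x)
  simp only [LinearMap.comp_apply, h1]
  exact hσ x _

end Extension

section Cat

variable {O : Type u} [CommRing O] [IsDomain O] [ValuationRing O]

abbrev MC (O : Type u) [CommRing O] := ModuleCat.{u} O

noncomputable def mres (O : Type u) [CommRing O] [IsDomain O] [ValuationRing O] :
    CategoryTheory.ProjectiveResolution (ModuleCat.of O (maximalIdeal O)) :=
  (CategoryTheory.HasProjectiveResolution.out
    (Z := ModuleCat.of O (maximalIdeal O))).some

variable {Y Y' : MC O}

noncomputable def hw (g : Y ⟶ Y') :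
    (mres O).complex.linearYonedaObj O Y ⟶ (mres O).complex.linearYonedaObj O Y' :=
  (HomologicalComplex.unopFunctor _ _).map
    ((NatTrans.mapHomologicalComplex
      (NatTrans.rightOp ((CategoryTheory.linearYoneda O (MC O)).map g))
      (ComplexShape.down ℕ)).app (mres O).complex).op

example (g : Y ⟶ Y') (j : ℕ) (φ : (mres O).complex.X j ⟶ Y) :
    (hw g).f j φ = φ ≫ g := rfl

end Cat

section Vanish

variable {O : Type u} [CommRing O] [IsDomain O] [ValuationRing O]

theorem factor_through {A B Y : Type u} [AddCommGroup A] [Module O A] [AddCommGroup B]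
    [Module O B] [AddCommGroup Y] [Module O Y] (p : A →ₗ[O] B) (φ : A →ₗ[O] Y)
    (h : LinearMap.ker p ≤ LinearMap.ker φ) (hp : Function.Surjective p) :
    ∃ φ' : B →ₗ[O] Y, φ' ∘ₗ p = φ := by
  refine ⟨((LinearMap.ker p).liftQ φ h) ∘ₗ (p.quotKerEquivOfSurjective hp).symm.toLinearMap, ?_⟩
  ext x
  have h1 : p.quotKerEquivOfSurjective hp (Submodule.Quotient.mk x) = p x := by
    simp [LinearMap.quotKerEquivOfSurjective, LinearMap.quotKerEquivRange]
  have h2 : (p.quotKerEquivOfSurjective hp).symm (p x) = Submodule.Quotient.mk x := by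
    rw [← h1, LinearEquiv.symm_apply_apply]
  simp [h2]

theorem mm_sat (hidem : maximalIdeal O * maximalIdeal O = maximalIdeal O)
    (x : (maximalIdeal O)) :
    x ∈ maximalIdeal O • (⊤ : Submodule O (maximalIdeal O)) := by
  have hx : (x : O) ∈ maximalIdeal O * maximalIdeal O := by rw [hidem]; exact x.2
  have main : ∃ h : (x : O) ∈ maximalIdeal O,
      (⟨(x : O), h⟩ : (maximalIdeal O)) ∈ maximalIdeal O • (⊤ : Submodule O (maximalIdeal O)) := by
    refine Submodule.mul_induction_on hx ?_ ?_
    · intro a ha b hb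
      refine ⟨Ideal.mul_mem_right _ _ ha, ?_⟩
      have : (⟨a * b, Ideal.mul_mem_right _ _ ha⟩ : (maximalIdeal O)) = a • ⟨b, hb⟩ :=
        Subtype.ext rfl
      rw [this]
      exact Submodule.smul_mem_smul ha Submodule.mem_top
    · rintro y z ⟨hy, hy'⟩ ⟨hz, hz'⟩
      refine ⟨Ideal.add_mem _ hy hz, ?_⟩
      have : (⟨y + z, Ideal.add_mem _ hy hz⟩ : (maximalIdeal O)) =
          (⟨y, hy⟩ : (maximalIdeal O)) + ⟨z, hz⟩ := Subtype.ext rfl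
      rw [this]
      exact Submodule.add_mem _ hy' hz'
  obtain ⟨h, hmem⟩ := main
  exact hmem

/-- `Module.Projective` for the objects of the resolution. -/
theorem projective_X (j : ℕ) : Module.Projective O ((mres O).complex.X j) := by
  rw [IsProjective.iff_projective]
  exact (mres O).projective j

theorem exactAtW (Y : MC O) (hY : IsAlphaNull (maximalIdeal O) Y)
    (hidem : maximalIdeal O * maximalIdeal O = maximalIdeal O) (n : ℕ) :
    ((mres O).complex.linearYonedaObj O Y).ExactAt n := by
  haveI := projective_X (O := O)
  cases n with
  | zero =>
    rw [HomologicalComplex.exactAt_iff' _ 0 0 1 CochainComplex.prev_nat_zero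
      ((ComplexShape.up ℕ).next_eq' rfl)]
    rw [ShortComplex.moduleCat_exact_iff]
    intro φ hφ
    let φₗ : (mres O).complex.X 0 →ₗ[O] Y := φ.hom
    have hφ' : LinearMap.comp φₗ ((mres O).complex.d 1 0).hom = 0 := by
      have h : (mres O).complex.d 1 0 ≫ φ = 0 := hφ
      exact congrArg ModuleCat.Hom.hom h
    have hexact := (mres O).exact₀
    rw [ShortComplex.moduleCat_exact_iff] at hexact
    have hker : LinearMap.ker ((mres O).π.f 0).hom ≤
        LinearMap.ker φₗ := by
      intro x hx
      obtain ⟨w, hw⟩ := hexact x hx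
      rw [LinearMap.mem_ker]
      have hfx : φₗ x = φₗ (((mres O).complex.d 1 0).hom w) := by
        rw [hw]
      rw [hfx, ← LinearMap.comp_apply, hφ']
      rfl
    have hsurj : Function.Surjective ((mres O).π.f 0).hom := by
      rw [← ModuleCat.epi_iff_surjective]
      infer_instance
    obtain ⟨φ', hφ'eq⟩ := factor_through _ φₗ hker hsurj
    have hzero : ∀ z, φ' z = 0 :=
      hom_eq_zero (maximalIdeal O) (mm_sat hidem) hY φ'
    have hφ0 : φₗ = 0 := by
      rw [← hφ'eq]
      ext x
      exact hzero _
    exact ⟨0, by rw [map_zero]; exact (ModuleCat.hom_ext (hφ0.trans ModuleCat.hom_zero.symm) : φ = 0).symm⟩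
  | succ n =>
    rw [HomologicalComplex.exactAt_iff' _ n (n + 1) (n + 2)
      (CochainComplex.prev_nat_succ n) ((ComplexShape.up ℕ).next_eq' rfl)]
    rw [ShortComplex.moduleCat_exact_iff]
    intro φ hφ
    let φₗ : (mres O).complex.X (n+1) →ₗ[O] Y := φ.hom
    have hφ' : LinearMap.comp φₗ ((mres O).complex.d (n+2) (n+1)).hom = 0 := by
      have h : (mres O).complex.d (n+2) (n+1) ≫ φ = 0 := hφ
      exact congrArg ModuleCat.Hom.hom h
    have hexact := (mres O).exact_succ n
    rw [ShortComplex.moduleCat_exact_iff] at hexact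
    have hkerφ : LinearMap.ker ((mres O).complex.d (n+1) n).hom ≤ LinearMap.ker φₗ := by
      intro x hx
      obtain ⟨w, hw⟩ := hexact x hx
      rw [LinearMap.mem_ker]
      have hfx : φₗ x = φₗ (((mres O).complex.d (n+2) (n+1)).hom w) := by rw [hw]
      rw [hfx, ← LinearMap.comp_apply, hφ']
      rfl
    have key : ∃ ψ : (mres O).complex.X n →ₗ[O] Y,
        ψ ∘ₗ ((mres O).complex.d (n+1) n).hom = φₗ := by
      cases n with
      | zero =>
        refine extend_lemma (T := (maximalIdeal O))
          (noTors_submodule _) hY _ ((mres O).π.f 0).hom ?_ φₗ hkerφ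
        apply le_antisymm
        · intro x hx
          have hexact0 := (mres O).exact₀
          rw [ShortComplex.moduleCat_exact_iff] at hexact0
          obtain ⟨w, hw⟩ := hexact0 x hx
          exact ⟨w, hw⟩
        · rintro _ ⟨w, rfl⟩
          exact LinearMap.congr_fun
            (congrArg ModuleCat.Hom.hom (mres O).complex_d_comp_π_f_zero) w
      | succ k =>
        refine extend_lemma (T := (mres O).complex.X k)
          (noTors_projective _) hY _ ((mres O).complex.d (k+1) k).hom ?_ φₗ hkerφ
        apply le_antisymm
        · intro x hx
          have hexactk := (mres O).exact_succ k
          rw [ShortComplex.moduleCat_exact_iff] at hexactk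
          obtain ⟨w, hw⟩ := hexactk x hx
          exact ⟨w, hw⟩
        · rintro _ ⟨w, rfl⟩
          rw [LinearMap.mem_ker]
          exact LinearMap.congr_fun
            (congrArg ModuleCat.Hom.hom ((mres O).complex.d_comp_d (k+2) (k+1) k) :
              LinearMap.comp ((mres O).complex.d (k+1) k).hom
                ((mres O).complex.d (k+2) (k+1)).hom = 0) w
    obtain ⟨ψ, hψ⟩ := key
    exact ⟨ModuleCat.ofHom ψ, ModuleCat.hom_ext hψ⟩

theorem isZeroHW (Y : MC O) (hY : IsAlphaNull (maximalIdeal O) Y)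
    (hidem : maximalIdeal O * maximalIdeal O = maximalIdeal O) (n : ℕ) :
    CategoryTheory.Limits.IsZero (((mres O).complex.linearYonedaObj O Y).homology n) := by
  rw [← HomologicalComplex.exactAt_iff_isZero_homology]
  exact exactAtW Y hY hidem n

end Vanish

section LES

variable {O : Type u} [CommRing O] [IsDomain O] [ValuationRing O]

theorem ext_map_isIso_of_homology {Y Y' : MC O} (g : Y ⟶ Y') (i : ℕ)
    (h : IsIso (HomologicalComplex.homologyMap (hw g) i)) :
    IsIso ((extMaximalIdeal O i).map g) := by
  set α := NatTrans.rightOp ((CategoryTheory.linearYoneda O (MC O)).map g) with hα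
  have e1 : (extMaximalIdeal O i).map g =
      ((NatTrans.leftDerived α i).app (ModuleCat.of O (maximalIdeal O))).unop := rfl
  rw [e1, CategoryTheory.ProjectiveResolution.leftDerived_app_eq α (mres O) i]
  set β := (NatTrans.mapHomologicalComplex α (ComplexShape.down ℕ)).app (mres O).complex with hβ
  -- identify β with the op of `hw g`
  have hβ' : (HomologicalComplex.opFunctor _ _).map (hw g).op = β := rfl
  -- homologyMap β is iso
  haveI hismid : IsIso (HomologicalComplex.homologyMap β i) := by
    rw [← hβ']
    have nat := HomologicalComplex.homologyOp_hom_naturality (φ := hw g) (i := i)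
    haveI : IsIso ((HomologicalComplex.homologyMap (hw g) i).op) := by
      rw [CategoryTheory.isIso_op_iff]; exact h
    have : IsIso (HomologicalComplex.homologyMap
          ((HomologicalComplex.opFunctor _ _).map (hw g).op) i ≫
          (((mres O).complex.linearYonedaObj O Y).homologyOp i).hom) := by
      have hop' := Iso.isIso_hom (((mres O).complex.linearYonedaObj O Y').homologyOp i)
      rw [nat]; exact IsIso.comp_isIso' hop' ‹_›
    have hop := Iso.isIso_hom (((mres O).complex.linearYonedaObj O Y).homologyOp i)
    exact @IsIso.of_isIso_comp_right _ _ _ _ _ _ (((mres O).complex.linearYonedaObj O Y).homologyOp i).hom hop this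
  simp only [unop_comp]
  haveI h1 : IsIso ((((mres O).isoLeftDerivedObj
      ((CategoryTheory.linearYoneda O (MC O)).obj Y').rightOp i).hom).unop) := inferInstance
  haveI h2 : IsIso ((((mres O).isoLeftDerivedObj
      ((CategoryTheory.linearYoneda O (MC O)).obj Y).rightOp i).inv).unop) := inferInstance
  haveI h3 : IsIso (((HomologicalComplex.homologyFunctor _ _ i).map β).unop) := by
    have : (HomologicalComplex.homologyFunctor _ _ i).map β =
        HomologicalComplex.homologyMap β i := rfl
    rw [this]
    exact @isIso_unop _ _ _ _ _ hismid
  exact IsIso.comp_isIso' (IsIso.comp_isIso' h2 h3) h1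

end LES

section LES2

open CategoryTheory Limits HomologicalComplex

variable {O : Type u} [CommRing O] [IsDomain O] [ValuationRing O]

theorem hw_comp {Y1 Y2 Y3 : MC O} (a : Y1 ⟶ Y2) (b : Y2 ⟶ Y3) :
    hw (a ≫ b) = hw a ≫ hw b := by
  apply HomologicalComplex.hom_ext
  intro j
  rfl

theorem hw_zero {Y1 Y2 : MC O} : hw (0 : Y1 ⟶ Y2) = 0 := by
  apply HomologicalComplex.hom_ext
  intro j
  apply ModuleCat.hom_ext
  apply LinearMap.ext
  intro φ
  show CategoryStruct.comp (obj := MC O) φ 0 = 0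
  exact Limits.comp_zero

theorem homology_hw_isIso {M N : Type u} [AddCommGroup M] [Module O M]
    [AddCommGroup N] [Module O N] (f : M →ₗ[O] N) (hf : IsAlphaIso (maximalIdeal O) f)
    (hidem : maximalIdeal O * maximalIdeal O = maximalIdeal O) (i : ℕ) :
    IsIso (HomologicalComplex.homologyMap (hw (ModuleCat.ofHom f)) i) := by
  classical
  set Kk : MC O := ModuleCat.of O (LinearMap.ker f) with hKk
  set Ii : MC O := ModuleCat.of O (LinearMap.range f) with hIi
  set Dd : MC O := ModuleCat.of O (N ⧸ LinearMap.range f) with hDd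
  set f1 : Kk ⟶ ModuleCat.of O M := ModuleCat.ofHom (LinearMap.ker f).subtype with hf1
  set g1 : ModuleCat.of O M ⟶ Ii := ModuleCat.ofHom f.rangeRestrict with hg1
  set f2 : Ii ⟶ ModuleCat.of O N := ModuleCat.ofHom (LinearMap.range f).subtype with hf2
  set g2 : ModuleCat.of O N ⟶ Dd := ModuleCat.ofHom (LinearMap.range f).mkQ with hg2
  have hK : IsAlphaNull (maximalIdeal O) Kk := fun γ hγ x => Subtype.ext (hf.1 γ hγ x.1 x.2)
  have hD : IsAlphaNull (maximalIdeal O) Dd := by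
    intro γ hγ y
    obtain ⟨y, rfl⟩ := Submodule.Quotient.mk_surjective _ y
    rw [← Submodule.Quotient.mk_smul, Submodule.Quotient.mk_eq_zero]
    exact hf.2 γ hγ y
  have hz1 : f1 ≫ g1 = 0 := by
    apply ModuleCat.hom_ext
    apply LinearMap.ext
    intro x
    exact Subtype.ext x.2
  have hz2 : f2 ≫ g2 = 0 := by
    apply ModuleCat.hom_ext
    apply LinearMap.ext
    intro y
    exact (Submodule.Quotient.mk_eq_zero _).2 y.2
  set WS1 : ShortComplex (CochainComplex (MC O) ℕ) :=
    ShortComplex.mk (hw f1) (hw g1) (by rw [← hw_comp, hz1, hw_zero]) with hWS1def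
  set WS2 : ShortComplex (CochainComplex (MC O) ℕ) :=
    ShortComplex.mk (hw f2) (hw g2) (by rw [← hw_comp, hz2, hw_zero]) with hWS2def
  haveI := projective_X (O := O)
  have hWS1 : WS1.ShortExact := by
    apply HomologicalComplex.shortExact_of_degreewise_shortExact
    intro j
    refine ShortComplex.ShortExact.mk' ?_ ?_ ?_
    · rw [ShortComplex.moduleCat_exact_iff]
      intro φ hφ
      let φₗ : (mres O).complex.X j →ₗ[O] M := φ.hom
      have hφ' : ∀ x, f (φₗ x) = 0 := by
        intro x
        exact congrArg Subtype.val (LinearMap.congr_fun (congrArg ModuleCat.Hom.hom hφ :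
          LinearMap.comp (f.rangeRestrict) φₗ = 0) x)
      refine ⟨ModuleCat.ofHom (LinearMap.codRestrict (LinearMap.ker f) φₗ (fun x => hφ' x)), ?_⟩
      apply ModuleCat.hom_ext
      apply LinearMap.ext
      intro x
      rfl
    · rw [ModuleCat.mono_iff_injective]
      intro φ ψ hh
      have hh' : LinearMap.comp ((LinearMap.ker f).subtype)
          φ.hom =
          LinearMap.comp ((LinearMap.ker f).subtype) ψ.hom := congrArg ModuleCat.Hom.hom hh
      apply ModuleCat.hom_ext
      apply LinearMap.ext
      intro x
      exact Subtype.ext (LinearMap.congr_fun hh' x)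
    · rw [ModuleCat.epi_iff_surjective]
      intro φ
      haveI : Epi g1 := (ModuleCat.epi_iff_surjective g1).2 f.surjective_rangeRestrict
      refine ⟨Projective.factorThru (φ : (mres O).complex.X j ⟶ Ii) g1, ?_⟩
      show Projective.factorThru (φ : (mres O).complex.X j ⟶ Ii) g1 ≫ g1 = φ
      exact Projective.factorThru_comp _ _
  have hWS2 : WS2.ShortExact := by
    apply HomologicalComplex.shortExact_of_degreewise_shortExact
    intro j
    refine ShortComplex.ShortExact.mk' ?_ ?_ ?_
    · rw [ShortComplex.moduleCat_exact_iff]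
      intro φ hφ
      let φₗ : (mres O).complex.X j →ₗ[O] N := φ.hom
      have hφ' : ∀ x, φₗ x ∈ LinearMap.range f := by
        intro x
        have := LinearMap.congr_fun (congrArg ModuleCat.Hom.hom hφ :
          LinearMap.comp ((LinearMap.range f).mkQ) φₗ = 0) x
        rw [← Submodule.Quotient.mk_eq_zero]
        exact this
      refine ⟨ModuleCat.ofHom (LinearMap.codRestrict (LinearMap.range f) φₗ (fun x => hφ' x)), ?_⟩
      apply ModuleCat.hom_ext
      apply LinearMap.ext
      intro x
      rfl
    · rw [ModuleCat.mono_iff_injective]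
      intro φ ψ hh
      have hh' : LinearMap.comp ((LinearMap.range f).subtype)
          φ.hom =
          LinearMap.comp ((LinearMap.range f).subtype) ψ.hom := congrArg ModuleCat.Hom.hom hh
      apply ModuleCat.hom_ext
      apply LinearMap.ext
      intro x
      exact Subtype.ext (LinearMap.congr_fun hh' x)
    · rw [ModuleCat.epi_iff_surjective]
      intro φ
      haveI : Epi g2 := (ModuleCat.epi_iff_surjective g2).2 (Submodule.mkQ_surjective _)
      refine ⟨Projective.factorThru (φ : (mres O).complex.X j ⟶ Dd) g2, ?_⟩
      show Projective.factorThru (φ : (mres O).complex.X j ⟶ Dd) g2 ≫ g2 = φ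
      exact Projective.factorThru_comp _ _
  -- homology of the complexes for Kk and Dd vanishes
  have hK0 : ∀ n, IsZero (((mres O).complex.linearYonedaObj O Kk).homology n) :=
    fun n => isZeroHW Kk hK hidem n
  have hD0 : ∀ n, IsZero (((mres O).complex.linearYonedaObj O Dd).homology n) :=
    fun n => isZeroHW Dd hD hidem n
  -- hw g1 induces iso on homology
  haveI hmono1 : Mono (homologyMap (hw g1) i) := by
    have e2 := hWS1.homology_exact₂ (i := i)
    have hfzero : homologyMap WS1.f i = 0 := (hK0 i).eq_of_src _ _
    exact e2.mono_g hfzero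
  haveI hepi1 : Epi (homologyMap (hw g1) i) := by
    have e3 := hWS1.homology_exact₃ i (i+1) rfl
    have hdzero : hWS1.δ i (i+1) rfl = 0 := (hK0 (i+1)).eq_of_tgt _ _
    exact e3.epi_f hdzero
  haveI hiso1 : IsIso (homologyMap (hw g1) i) := isIso_of_mono_of_epi _
  -- hw f2 induces iso on homology
  haveI hepi2 : Epi (homologyMap (hw f2) i) := by
    have e2 := hWS2.homology_exact₂ (i := i)
    have hgzero : homologyMap WS2.g i = 0 := (hD0 i).eq_of_tgt _ _
    exact e2.epi_f hgzero
  haveI hmono2 : Mono (homologyMap (hw f2) i) := by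
    cases i with
    | zero =>
      haveI : Mono ((hw f2).f 0) := by
        rw [ModuleCat.mono_iff_injective]
        intro φ ψ hh
        have hh' : LinearMap.comp ((LinearMap.range f).subtype)
            φ.hom =
            LinearMap.comp ((LinearMap.range f).subtype)
              ψ.hom := congrArg ModuleCat.Hom.hom hh
        apply ModuleCat.hom_ext
        apply LinearMap.ext
        intro x
        exact Subtype.ext (LinearMap.congr_fun hh' x)
      exact HomologicalComplex.mono_homologyMap_of_mono_of_not_rel (hw f2) 0
        (fun k hk => Nat.succ_ne_zero k hk)
    | succ n =>
      have e1 := hWS2.homology_exact₁ n (n+1) rfl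
      have hdzero : hWS2.δ n (n+1) rfl = 0 := (hD0 n).eq_of_src _ _
      exact e1.mono_g hdzero
  -- conclude
  have hff : ModuleCat.ofHom f = g1 ≫ f2 := rfl
  haveI hiso2 : IsIso (homologyMap (hw f2) i) := isIso_of_mono_of_epi _
  rw [hff, hw_comp, HomologicalComplex.homologyMap_comp]
  exact IsIso.comp_isIso

end LES2

section Fin

variable {O : Type u} [CommRing O] [IsDomain O] [ValuationRing O]

theorem isZero_ext (Y : MC O) (hY : IsAlphaNull (maximalIdeal O) Y)
    (hidem : maximalIdeal O * maximalIdeal O = maximalIdeal O) (i : ℕ) :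
    CategoryTheory.Limits.IsZero ((extMaximalIdeal O i).obj Y) :=
  (isZeroHW Y hY hidem i).of_iso ((mres O).isoExt i Y)

theorem subsingleton_of_isZero {E : MC O} (h : CategoryTheory.Limits.IsZero E) :
    Subsingleton E := by
  have hid : (𝟙 E : E ⟶ E) = 0 := h.eq_of_src _ _
  refine ⟨fun a b => ?_⟩
  have ha : a = (𝟙 E : E ⟶ E) a := rfl
  have hb : b = (𝟙 E : E ⟶ E) b := rfl
  rw [ha, hb, hid]
  show (0 : E →ₗ[O] E) a = (0 : E →ₗ[O] E) b
  simp

end Fin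


theorem ext_maximalIdeal_sends_alphaIso_to_iso
    (O : Type u) [CommRing O] [IsDomain O] [ValuationRing O]
    (hidem : maximalIdeal O * maximalIdeal O = maximalIdeal O) (i : ℕ) :
    (∀ (M N : Type u) (_ : AddCommGroup M) (_ : Module O M) (_ : AddCommGroup N)
        (_ : Module O N) (f : M →ₗ[O] N), IsAlphaIso (maximalIdeal O) f →
        IsIso ((extMaximalIdeal O i).map (ModuleCat.ofHom f))) ∧
      (∀ (P : Type u) (_ : AddCommGroup P) (_ : Module O P), IsAlphaNull (maximalIdeal O) P →
        Subsingleton ((extMaximalIdeal O i).obj (ModuleCat.of O P))) := by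
  constructor
  · intro M N _ _ _ _ f hf
    exact ext_map_isIso_of_homology (ModuleCat.ofHom f) i (homology_hw_isIso f hf hidem i)
  · intro P _ _ hP
    exact subsingleton_of_isZero (isZero_ext (ModuleCat.of O P) hP hidem i)
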